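/- Let η ∈ C¹(ℝ²). Let E and F be open sets of ℝ² of class C² such that the signed curvature of E equals η(x) at every point x ∈ ∂E and the signed curvature of F equals η(x) at every point x ∈ ∂F. Then the set { x ∈ ∂E ∩ ∂F : ν_E(x) = ν_F(x) } is both open and closed in ∂E and in ∂F. -/

import Mathlib

open MeasureTheory Set
open scoped ENNReal Topology

noncomputable section

abbrev Plane : Type := EuclideanSpace ℝ (Fin 2)

/-- The point of the plane with coordinates `(z, t)`. -/
def coords (p : ℝ × ℝ) : Plane :=
  p.1 • EuclideanSpace.single (0 : Fin 2) (1 : ℝ) + p.2 • EuclideanSpace.single (1 : Fin 2) (1 : ℝ)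

/-- A rotation of the plane: a linear isometry with determinant one. -/
def IsRotation (R : Plane ≃ₗᵢ[ℝ] Plane) : Prop :=
  LinearMap.det (R.toLinearEquiv : Plane →ₗ[ℝ] Plane) = 1

/-- `(r, R, u)` is a `C^k` boundary chart for the set `E` at the boundary point `x`:
in the rotated square of side `2r` centered at `x`, `E` is the hypograph of `u` and
`∂E` is the graph of `u`. -/
def IsChartAt (k : ℕ∞) (E : Set Plane) (x : Plane) (r : ℝ) (R : Plane ≃ₗᵢ[ℝ] Plane)
    (u : ℝ → ℝ) : Prop :=
  0 < r ∧ IsRotation R ∧ ContDiffOn ℝ k u (Icc (-r) r) ∧ u 0 = 0 ∧ deriv u 0 = 0 ∧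
  ∀ p : ℝ × ℝ, p ∈ Ioo (-r) r ×ˢ Ioo (-r) r →
    ((x + R (coords p) ∈ E ↔ p.2 < u p.1) ∧ (x + R (coords p) ∈ frontier E ↔ p.2 = u p.1))

/-- An open subset of the plane, with nonempty boundary, of class `C^k`. -/
def IsCkSet (k : ℕ∞) (E : Set Plane) : Prop :=
  IsOpen E ∧ (frontier E).Nonempty ∧ ∀ x ∈ frontier E, ∃ r R u, IsChartAt k E x r R u

/-- `ν` is the outward unit normal to `E` at `x` (computed from some `C¹` boundary chart). -/
def HasNormalAt (E : Set Plane) (x ν : Plane) : Prop :=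
  ∃ r R u, IsChartAt 1 E x r R u ∧ ν = R (EuclideanSpace.single (1 : Fin 2) (1 : ℝ))

/-- `h` is the signed curvature of `E` at `x` (computed from some `C²` boundary chart). -/
def HasCurvatureAt (E : Set Plane) (x : Plane) (h : ℝ) : Prop :=
  ∃ r R u, IsChartAt 2 E x r R u ∧ h = -(deriv (deriv u) 0)

namespace Aux

notation "e₀" => EuclideanSpace.single (0 : Fin 2) (1 : ℝ)
notation "e₁" => EuclideanSpace.single (1 : Fin 2) (1 : ℝ)

lemma eq_coords (v : Plane) : v = coords (v 0, v 1) := by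
  ext i
  fin_cases i <;> simp [coords, EuclideanSpace.single_apply]

@[simp] lemma coords_apply0 (p : ℝ × ℝ) : coords p 0 = p.1 := by
  simp [coords, EuclideanSpace.single_apply]

@[simp] lemma coords_apply1 (p : ℝ × ℝ) : coords p 1 = p.2 := by
  simp [coords, EuclideanSpace.single_apply]

lemma coords_add (p q : ℝ × ℝ) : coords (p.1 + q.1, p.2 + q.2) = coords p + coords q := by
  ext i; fin_cases i <;> simp

lemma coords_smul' (c a b : ℝ) : coords (c * a, c * b) = c • coords (a, b) := by
  ext i; fin_cases i <;> simp

lemma continuous_coords : Continuous coords := by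
  unfold coords; fun_prop

lemma inner_eq (v w : Plane) : (inner ℝ v w : ℝ) = v 0 * w 0 + v 1 * w 1 := by
  simp [PiLp.inner_apply, Fin.sum_univ_two, mul_comm]

lemma norm_sq_eq (v : Plane) : ‖v‖ ^ 2 = v 0 ^ 2 + v 1 ^ 2 := by
  rw [← real_inner_self_eq_norm_sq, inner_eq]; ring

lemma det_eq (R : Plane ≃ₗᵢ[ℝ] Plane) :
    LinearMap.det (R.toLinearEquiv : Plane →ₗ[ℝ] Plane)
      = R e₀ 0 * R e₁ 1 - R e₁ 0 * R e₀ 1 := by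
  classical
  let b : Module.Basis (Fin 2) ℝ Plane := (EuclideanSpace.basisFun (Fin 2) ℝ).toBasis
  rw [← LinearMap.det_toMatrix b, Matrix.det_fin_two]
  have h0 : b 0 = e₀ := by ext j; simp [b]
  have h1 : b 1 = e₁ := by ext j; simp [b]
  simp [LinearMap.toMatrix_apply, b, h0, h1]

lemma rot_e1 (Q : Plane ≃ₗᵢ[ℝ] Plane) (hQ : IsRotation Q) :
    Q e₁ = coords (-(Q e₀ 1), Q e₀ 0) := by
  have hn0 : ‖Q e₀‖ ^ 2 = 1 := by
    rw [Q.norm_map, EuclideanSpace.norm_single]; norm_num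
  have hn1 : ‖Q e₁‖ ^ 2 = 1 := by
    rw [Q.norm_map, EuclideanSpace.norm_single]; norm_num
  have horth : (inner ℝ (Q e₀) (Q e₁) : ℝ) = 0 := by
    rw [Q.inner_map_map, inner_eq]
    simp [EuclideanSpace.single_apply]
  rw [norm_sq_eq] at hn0 hn1
  rw [inner_eq] at horth
  have hdet := hQ
  rw [IsRotation, det_eq] at hdet
  set a := Q e₀ 0; set b := Q e₀ 1; set c := Q e₁ 0; set d := Q e₁ 1
  have hc : c = -b := by
    nlinarith [sq_nonneg (c + b), sq_nonneg (c - b), sq_nonneg (d - a), sq_nonneg (d + a)]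
  have hd : d = a := by
    nlinarith [sq_nonneg (c + b), sq_nonneg (c - b), sq_nonneg (d - a), sq_nonneg (d + a)]
  calc Q e₁ = coords (c, d) := eq_coords _
  _ = coords (-b, a) := by rw [hc, hd]

lemma rot_norm_e0 (Q : Plane ≃ₗᵢ[ℝ] Plane) : Q e₀ 0 ^ 2 + Q e₀ 1 ^ 2 = 1 := by
  have hn0 : ‖Q e₀‖ ^ 2 = 1 := by
    rw [Q.norm_map, EuclideanSpace.norm_single]; norm_num
  rw [norm_sq_eq] at hn0; exact hn0

lemma rot_coords (Q : Plane ≃ₗᵢ[ℝ] Plane) (hQ : IsRotation Q) (p : ℝ × ℝ) :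
    Q (coords p) = coords (p.1 * Q e₀ 0 - p.2 * Q e₀ 1, p.1 * Q e₀ 1 + p.2 * Q e₀ 0) := by
  have h1 := rot_e1 Q hQ
  have : coords p = p.1 • e₀ + p.2 • e₁ := rfl
  rw [this, map_add, Q.map_smul, Q.map_smul, h1]
  ext i; fin_cases i <;> simp <;> ring

lemma isRotation_comp (R R' : Plane ≃ₗᵢ[ℝ] Plane) (hR : IsRotation R) (hR' : IsRotation R') :
    IsRotation (R'.trans R.symm) := by
  have hsymm : IsRotation R.symm := by
    have : LinearMap.det ((R.trans R.symm).toLinearEquiv : Plane →ₗ[ℝ] Plane) = 1 := by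
      have : R.trans R.symm = LinearIsometryEquiv.refl ℝ Plane := by
        ext w; simp
      rw [this, show ((LinearIsometryEquiv.refl ℝ Plane).toLinearEquiv : Plane →ₗ[ℝ] Plane)
          = LinearMap.id from rfl, LinearMap.det_id]
    rw [show ((R.trans R.symm).toLinearEquiv : Plane →ₗ[ℝ] Plane)
        = (R.symm.toLinearEquiv : Plane →ₗ[ℝ] Plane) ∘ₗ (R.toLinearEquiv : Plane →ₗ[ℝ] Plane)
        from rfl, LinearMap.det_comp, hR] at this
    rw [IsRotation]
    linarith [this]
  rw [IsRotation, show ((R'.trans R.symm).toLinearEquiv : Plane →ₗ[ℝ] Plane)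
      = (R.symm.toLinearEquiv : Plane →ₗ[ℝ] Plane) ∘ₗ (R'.toLinearEquiv : Plane →ₗ[ℝ] Plane)
      from rfl, LinearMap.det_comp, hsymm, hR']
  ring

end Aux

-- chart comparison
section ChartCompare
open Filter

variable {E : Set Plane} {x : Plane} {r : ℝ} {R : Plane ≃ₗᵢ[ℝ] Plane} {u : ℝ → ℝ}
  {z r' : ℝ} {R' : Plane ≃ₗᵢ[ℝ] Plane} {v : ℝ → ℝ}

lemma chart_mono {k k' : ℕ∞} (hkk : k' ≤ k) (h : IsChartAt k E x r R u) :
    IsChartAt k' E x r R u :=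
  ⟨h.1, h.2.1, h.2.2.1.of_le (by exact_mod_cast hkk), h.2.2.2⟩

lemma chart_compare (hC : IsChartAt 1 E x r R u) (hz : z ∈ Ioo (-r) r) (hu : |u z| < r)
    (hC' : IsChartAt 1 E (x + R (coords (z, u z))) r' R' v) :
    (R.symm (R' e₀)) 1 = deriv u z * ((R.symm (R' e₀)) 0) ∧
    (R.symm (R' e₀)) 0 = (Real.sqrt (1 + deriv u z ^ 2))⁻¹ ∧
    (∀ᶠ s in 𝓝 (0:ℝ), u z + (s * (R.symm (R' e₀)) 1 + v s * (R.symm (R' e₀)) 0)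
        = u (z + (s * (R.symm (R' e₀)) 0 - v s * (R.symm (R' e₀)) 1))) ∧
    R' e₁ = R (coords (-(R.symm (R' e₀)) 1, (R.symm (R' e₀)) 0)) := by
  obtain ⟨hr, hRrot, hu1, hu0, hu'0, hmem⟩ := hC
  obtain ⟨hr', hR'rot, hv1, hv0, hv'0, hmem'⟩ := hC'
  set Q : Plane ≃ₗᵢ[ℝ] Plane := R'.trans R.symm with hQdef
  have hQrot : IsRotation Q := Aux.isRotation_comp R R' hRrot hR'rot
  have hQe0 : Q e₀ = R.symm (R' e₀) := rfl
  set c : ℝ := (R.symm (R' e₀)) 0 with hcdef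
  set σ : ℝ := (R.symm (R' e₀)) 1 with hσdef
  set d : ℝ := deriv u z with hddef
  -- the key mapping
  have hmap : ∀ q : ℝ × ℝ, x + R (coords (z, u z)) + R' (coords q)
      = x + R (coords (z + (q.1 * c - q.2 * σ), u z + (q.1 * σ + q.2 * c))) := by
    intro q
    have h1 : R' (coords q) = R (Q (coords q)) := by
      rw [hQdef]; simp
    rw [h1, Aux.rot_coords Q hQrot, hQe0, ← hcdef, ← hσdef, add_assoc, ← map_add R,
      ← Aux.coords_add]
  -- differentiability facts
  have hudiff : DifferentiableAt ℝ u z := by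
    refine (hu1.differentiableOn (by norm_num)).differentiableAt ?_
    exact Icc_mem_nhds hz.1 hz.2
  have hvdiff : DifferentiableAt ℝ v 0 := by
    refine (hv1.differentiableOn (by norm_num)).differentiableAt ?_
    exact Icc_mem_nhds (by linarith) hr'
  have hvd : HasDerivAt v 0 0 := by
    have h := hvdiff.hasDerivAt; rwa [hv'0] at h
  have hvcont : ContinuousAt v 0 := hvdiff.continuousAt
  -- the eventual identity
  have hsq' : ∀ᶠ s in 𝓝 (0:ℝ), (s, v s) ∈ Ioo (-r') r' ×ˢ Ioo (-r') r' := by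
    have hct : ContinuousAt (fun s => (s, v s)) 0 := continuousAt_id.prodMk hvcont
    have : Ioo (-r') r' ×ˢ Ioo (-r') r' ∈ 𝓝 ((0:ℝ), v 0) := by
      rw [hv0]
      exact (isOpen_Ioo.prod isOpen_Ioo).mem_nhds (by constructor <;> constructor <;> simp <;> linarith)
    exact hct.preimage_mem_nhds this
  have hφψ : ∀ᶠ s in 𝓝 (0:ℝ),
      (z + (s * c - v s * σ), u z + (s * σ + v s * c)) ∈ Ioo (-r) r ×ˢ Ioo (-r) r := by
    have hct : ContinuousAt (fun s => (z + (s * c - v s * σ), u z + (s * σ + v s * c))) 0 := by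
      fun_prop
    have : Ioo (-r) r ×ˢ Ioo (-r) r ∈ 𝓝 ((z + ((0:ℝ) * c - v 0 * σ), u z + ((0:ℝ) * σ + v 0 * c))) := by
      rw [hv0]
      refine (isOpen_Ioo.prod isOpen_Ioo).mem_nhds ?_
      have h1 := hz.1; have h2 := hz.2
      have h3 := abs_lt.1 hu
      constructor <;> constructor <;> simp <;> [skip; skip; linarith; linarith] <;> linarith
    exact hct.preimage_mem_nhds this
  have hid : ∀ᶠ s in 𝓝 (0:ℝ), u z + (s * σ + v s * c) = u (z + (s * c - v s * σ)) := by
    filter_upwards [hsq', hφψ] with s h1 h2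
    have hfr : x + R (coords (z, u z)) + R' (coords (s, v s)) ∈ frontier E :=
      ((hmem' (s, v s) h1).2).mpr rfl
    rw [hmap (s, v s)] at hfr
    exact ((hmem _ h2).2).mp hfr
  -- first-order identity
  have hφd : HasDerivAt (fun s => z + (s * c - v s * σ)) c 0 := by
    have : HasDerivAt (fun s : ℝ => s * c - v s * σ) (1 * c - 0 * σ) 0 :=
      ((hasDerivAt_id 0).mul_const c).sub (hvd.mul_const σ)
    simpa using this.const_add z
  have hφ0 : z + ((0:ℝ) * c - v 0 * σ) = z := by rw [hv0]; ring
  have hψd : HasDerivAt (fun s => u z + (s * σ + v s * c)) σ 0 := by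
    have : HasDerivAt (fun s : ℝ => s * σ + v s * c) (1 * σ + 0 * c) 0 :=
      ((hasDerivAt_id 0).mul_const σ).add (hvd.mul_const c)
    simpa using this.const_add (u z)
  have hcomp : HasDerivAt (fun s => u (z + (s * c - v s * σ))) (d * c) 0 := by
    have h1 : HasDerivAt u d (z + ((0:ℝ) * c - v 0 * σ)) := by
      rw [hφ0]; exact hudiff.hasDerivAt
    exact h1.comp 0 hφd
  have hfirst : σ = d * c := by
    have : HasDerivAt (fun s => u z + (s * σ + v s * c)) (d * c) 0 :=
      hcomp.congr_of_eventuallyEq (hid.mono fun s hs => hs)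
    exact hψd.unique this
  -- sign of c
  have hside : ∀ᶠ t in 𝓝[>] (0:ℝ), u z - t * c < u (z + t * σ) := by
    have h1 : ∀ᶠ t in 𝓝 (0:ℝ), ((0:ℝ), -t) ∈ Ioo (-r') r' ×ˢ Ioo (-r') r' := by
      have hct : ContinuousAt (fun t : ℝ => ((0:ℝ), -t)) 0 := by fun_prop
      have : Ioo (-r') r' ×ˢ Ioo (-r') r' ∈ 𝓝 ((0:ℝ), -(0:ℝ)) :=
        (isOpen_Ioo.prod isOpen_Ioo).mem_nhds (by constructor <;> constructor <;> simp <;> linarith)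
      exact hct.preimage_mem_nhds this
    have h2 : ∀ᶠ t in 𝓝 (0:ℝ),
        (z + ((0:ℝ) * c - (-t) * σ), u z + ((0:ℝ) * σ + (-t) * c)) ∈ Ioo (-r) r ×ˢ Ioo (-r) r := by
      have hct : ContinuousAt
          (fun t : ℝ => (z + ((0:ℝ) * c - (-t) * σ), u z + ((0:ℝ) * σ + (-t) * c))) 0 := by
        fun_prop
      have : Ioo (-r) r ×ˢ Ioo (-r) r ∈ 𝓝 ((z + ((0:ℝ) * c - (-(0:ℝ)) * σ),
          u z + ((0:ℝ) * σ + (-(0:ℝ)) * c))) := by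
        refine (isOpen_Ioo.prod isOpen_Ioo).mem_nhds ?_
        have h3 := abs_lt.1 hu
        have h4 := hz.1; have h5 := hz.2
        constructor <;> constructor <;> simp <;> [skip; skip; linarith; linarith] <;> linarith
      exact hct.preimage_mem_nhds this
    filter_upwards [nhdsWithin_le_nhds h1, nhdsWithin_le_nhds h2, self_mem_nhdsWithin]
      with t h1t h2t (ht : 0 < t)
    have hinE : x + R (coords (z, u z)) + R' (coords ((0:ℝ), -t)) ∈ E := by
      refine ((hmem' ((0:ℝ), -t) h1t).1).mpr ?_
      rw [hv0]; simpa using ht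
    rw [hmap ((0:ℝ), -t)] at hinE
    have hlt := ((hmem _ h2t).1).mp hinE
    have harg : z + ((0:ℝ) * c - (-t) * σ) = z + t * σ := by ring
    rw [harg] at hlt
    simp only at hlt
    linarith [hlt]
  have hslope : Tendsto (fun t : ℝ => (u (z + t * σ) - u z) / t) (𝓝[>] 0) (𝓝 (d * σ)) := by
    have hg : HasDerivAt (fun t : ℝ => u (z + t * σ)) (d * σ) 0 := by
      have hlin : HasDerivAt (fun t : ℝ => z + t * σ) σ 0 := by
        simpa using ((hasDerivAt_id (0:ℝ)).mul_const σ).const_add z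
      have h1 : HasDerivAt u d (z + (0:ℝ) * σ) := by
        rw [show z + (0:ℝ) * σ = z by ring]; exact hudiff.hasDerivAt
      exact h1.comp 0 hlin
    have hsl := hasDerivAt_iff_tendsto_slope.mp hg
    have hsl' : Tendsto (slope (fun t : ℝ => u (z + t * σ)) 0) (𝓝[>] 0) (𝓝 (d * σ)) :=
      hsl.mono_left (nhdsWithin_mono 0 (fun t ht => ne_of_gt ht))
    refine hsl'.congr' ?_
    filter_upwards [self_mem_nhdsWithin] with t (ht : 0 < t)
    rw [slope_def_field]
    simp [div_eq_div_iff (ne_of_gt ht)]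
  have hge : -c ≤ d * σ := by
    refine ge_of_tendsto hslope ?_
    filter_upwards [hside, self_mem_nhdsWithin] with t h1t (ht : 0 < t)
    rw [le_div_iff₀ ht]
    nlinarith [h1t]
  have h1d : (0:ℝ) < 1 + d ^ 2 := by positivity
  have hc2 : c ^ 2 * (1 + d ^ 2) = 1 := by
    have := Aux.rot_norm_e0 Q
    rw [hQe0] at this
    rw [← hcdef, ← hσdef] at this
    linear_combination this - (σ + d * c) * hfirst
  rw [hfirst] at hge
  have hcpos : 0 < c := by nlinarith [hge, hc2, h1d]
  have hcval : c = (Real.sqrt (1 + d ^ 2))⁻¹ := by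
    have hA : (0:ℝ) < Real.sqrt (1 + d ^ 2) := Real.sqrt_pos.mpr h1d
    have hA2 : Real.sqrt (1 + d ^ 2) ^ 2 = 1 + d ^ 2 := Real.sq_sqrt (le_of_lt h1d)
    have hac : Real.sqrt (1 + d ^ 2) * c = 1 := by
      have hfac : (Real.sqrt (1 + d ^ 2) * c - 1) * (Real.sqrt (1 + d ^ 2) * c + 1) = 0 := by
        linear_combination c ^ 2 * hA2 + hc2
      rcases mul_eq_zero.1 hfac with h | h
      · linarith
      · nlinarith
    field_simp
    linarith [hac]
  refine ⟨hfirst, hcval, hid.mono (fun s hs => hs), ?_⟩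
  have : R' e₁ = R (Q e₁) := by rw [hQdef]; simp
  rw [this, Aux.rot_e1 Q hQrot, hQe0]

end ChartCompare

section Values
open Filter

variable {E : Set Plane} {x : Plane} {r : ℝ} {R : Plane ≃ₗᵢ[ℝ] Plane} {u : ℝ → ℝ} {z : ℝ}

lemma coords_zero : coords (0, 0) = 0 := by
  ext i; fin_cases i <;> simp

lemma coords_e1 : coords (0, 1) = e₁ := by
  ext i; fin_cases i <;> simp

lemma normal_val (hC : IsChartAt 1 E x r R u) (hz : z ∈ Ioo (-r) r) (hu : |u z| < r)
    {ν : Plane} (hν : HasNormalAt E (x + R (coords (z, u z))) ν) :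
    ν = (Real.sqrt (1 + deriv u z ^ 2))⁻¹ • R (coords (-(deriv u z), 1)) := by
  obtain ⟨r', R', v, hC', hνe⟩ := hν
  obtain ⟨h1, h2, h3, h4⟩ := chart_compare hC hz hu hC'
  rw [hνe, h4, h1, h2]
  set A := (Real.sqrt (1 + deriv u z ^ 2))⁻¹ with hA
  rw [show (-(deriv u z * A), A) = (A * -(deriv u z), A * 1) from by simp [mul_comm],
    Aux.coords_smul']
  exact R.map_smul A (coords (-(deriv u z), 1))

lemma normal_base (hC : IsChartAt 1 E x r R u) {ν : Plane} (hν : HasNormalAt E x ν) :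
    ν = R e₁ := by
  have hr := hC.1
  have hu0 := hC.2.2.2.1
  have hu'0 := hC.2.2.2.2.1
  have h0 : x + R (coords (0, u 0)) = x := by
    rw [hu0, coords_zero, map_zero, add_zero]
  have hν' : HasNormalAt E (x + R (coords (0, u 0))) ν := h0.symm ▸ hν
  have := normal_val hC (z := 0) ⟨by linarith, hr⟩ (by rw [hu0]; simpa using hr) hν'
  rw [this, hu'0]
  simp [coords_e1]

lemma curv_val (hC : IsChartAt 2 E x r R u) (hz : z ∈ Ioo (-r) r) (hu : |u z| < r)
    {h : ℝ} (hcv : HasCurvatureAt E (x + R (coords (z, u z))) h) :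
    h = -(deriv (deriv u) z * ((Real.sqrt (1 + deriv u z ^ 2))⁻¹) ^ 3) := by
  obtain ⟨r', R', v, hC', hh⟩ := hcv
  obtain ⟨h1, h2, h3, h4⟩ :=
    chart_compare (chart_mono (by norm_num) hC) hz hu (chart_mono (by norm_num) hC')
  obtain ⟨hr, hRrot, hu2, hu0, hu'0, hmem⟩ := hC
  obtain ⟨hr', hR'rot, hv2, hv0, hv'0, hmem'⟩ := hC'
  set c : ℝ := (R.symm (R' e₀)) 0 with hcdef
  set σ : ℝ := (R.symm (R' e₀)) 1 with hσdef
  set d : ℝ := deriv u z with hddef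
  -- regularity
  have huO : ContDiffOn ℝ 2 u (Ioo (-r) r) := hu2.mono Ioo_subset_Icc_self
  have hdO : ContDiffOn ℝ 1 (deriv u) (Ioo (-r) r) :=
    huO.deriv_of_isOpen isOpen_Ioo (by norm_num)
  have hvO : ContDiffOn ℝ 2 v (Ioo (-r') r') := hv2.mono Ioo_subset_Icc_self
  have hdvO : ContDiffOn ℝ 1 (deriv v) (Ioo (-r') r') :=
    hvO.deriv_of_isOpen isOpen_Ioo (by norm_num)
  have hz0' : (0:ℝ) ∈ Ioo (-r') r' := ⟨by linarith, hr'⟩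
  have hud : ∀ w ∈ Ioo (-r) r, DifferentiableAt ℝ u w := fun w hw =>
    (huO.differentiableOn (by norm_num)).differentiableAt (isOpen_Ioo.mem_nhds hw)
  have hvd : ∀ s ∈ Ioo (-r') r', DifferentiableAt ℝ v s := fun s hs =>
    (hvO.differentiableOn (by norm_num)).differentiableAt (isOpen_Ioo.mem_nhds hs)
  have hdud : DifferentiableAt ℝ (deriv u) z :=
    (hdO.differentiableOn (by norm_num)).differentiableAt (isOpen_Ioo.mem_nhds hz)
  have hdvd : DifferentiableAt ℝ (deriv v) 0 :=
    (hdvO.differentiableOn (by norm_num)).differentiableAt (isOpen_Ioo.mem_nhds hz0')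
  have hvc : ContinuousAt v 0 := (hvd 0 hz0').continuousAt
  -- eventual membership
  have hev1 : ∀ᶠ s in 𝓝 (0:ℝ), s ∈ Ioo (-r') r' :=
    eventually_of_mem (isOpen_Ioo.mem_nhds hz0') (fun s hs => hs)
  have hφev : ∀ᶠ s in 𝓝 (0:ℝ), z + (s * c - v s * σ) ∈ Ioo (-r) r := by
    have hct : ContinuousAt (fun s => z + (s * c - v s * σ)) 0 := by fun_prop
    have : Ioo (-r) r ∈ 𝓝 (z + ((0:ℝ) * c - v 0 * σ)) := by
      rw [hv0]
      refine isOpen_Ioo.mem_nhds ?_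
      simpa using hz
    exact hct.preimage_mem_nhds this
  -- derivative of the identity
  have h3' : (fun s => u z + (s * σ + v s * c)) =ᶠ[𝓝 0] fun s => u (z + (s * c - v s * σ)) := h3
  have key : ∀ᶠ s in 𝓝 (0:ℝ),
      σ + deriv v s * c = deriv u (z + (s * c - v s * σ)) * (c - deriv v s * σ) := by
    filter_upwards [h3'.deriv, hev1, hφev] with s hds hs hφs
    have hL : HasDerivAt (fun s => u z + (s * σ + v s * c)) (σ + deriv v s * c) s := by
      have : HasDerivAt (fun s : ℝ => s * σ + v s * c) (1 * σ + deriv v s * c) s :=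
        ((hasDerivAt_id s).mul_const σ).add ((hvd s hs).hasDerivAt.mul_const c)
      simpa using this.const_add (u z)
    have hφd : HasDerivAt (fun s => z + (s * c - v s * σ)) (c - deriv v s * σ) s := by
      have : HasDerivAt (fun s : ℝ => s * c - v s * σ) (1 * c - deriv v s * σ) s :=
        ((hasDerivAt_id s).mul_const c).sub ((hvd s hs).hasDerivAt.mul_const σ)
      simpa using this.const_add z
    have hRt : HasDerivAt (fun s => u (z + (s * c - v s * σ)))
        (deriv u (z + (s * c - v s * σ)) * (c - deriv v s * σ)) s :=
      ((hud _ hφs).hasDerivAt.comp s hφd)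
    rw [← hL.deriv, hds, hRt.deriv]
  -- second derivative at 0
  have hφd0 : HasDerivAt (fun s => z + (s * c - v s * σ)) c 0 := by
    have hv00 : HasDerivAt v 0 0 := by
      have h := (hvd 0 hz0').hasDerivAt; rwa [hv'0] at h
    have : HasDerivAt (fun s : ℝ => s * c - v s * σ) (1 * c - 0 * σ) 0 :=
      ((hasDerivAt_id 0).mul_const c).sub (hv00.mul_const σ)
    simpa using this.const_add z
  have hL2 : HasDerivAt (fun s => σ + deriv v s * c) (deriv (deriv v) 0 * c) 0 := by
    simpa using (hdvd.hasDerivAt.mul_const c).const_add σ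
  have hdu_comp : HasDerivAt (fun s => deriv u (z + (s * c - v s * σ)))
      (deriv (deriv u) z * c) 0 := by
    have h0 : HasDerivAt (deriv u) (deriv (deriv u) z) (z + ((0:ℝ) * c - v 0 * σ)) := by
      rw [show z + ((0:ℝ) * c - v 0 * σ) = z from by rw [hv0]; ring]
      exact hdud.hasDerivAt
    exact h0.comp 0 hφd0
  have hfac : HasDerivAt (fun s => c - deriv v s * σ) (-(deriv (deriv v) 0 * σ)) 0 := by
    simpa using ((hdvd.hasDerivAt.mul_const σ).const_sub c)
  have hR2 : HasDerivAt (fun s => deriv u (z + (s * c - v s * σ)) * (c - deriv v s * σ))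
      (deriv (deriv u) z * c * (c - deriv v 0 * σ) + deriv u (z + ((0:ℝ) * c - v 0 * σ)) * -(deriv (deriv v) 0 * σ)) 0 :=
    hdu_comp.mul hfac
  have veq : deriv (deriv v) 0 * c
      = deriv (deriv u) z * c * c + d * -(deriv (deriv v) 0 * σ) := by
    have hL2' : HasDerivAt (fun s => σ + deriv v s * c)
        (deriv (deriv u) z * c * (c - deriv v 0 * σ) + deriv u (z + ((0:ℝ) * c - v 0 * σ)) * -(deriv (deriv v) 0 * σ)) 0 :=
      hR2.congr_of_eventuallyEq (key.mono fun s hs => hs)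
    have := hL2.unique hL2'
    rw [hv'0] at this
    rw [this, show z + ((0:ℝ) * c - v 0 * σ) = z from by rw [hv0]; ring, ← hddef]
    ring
  -- algebra
  have h1d : (0:ℝ) < 1 + d ^ 2 := by positivity
  have hA : (0:ℝ) < Real.sqrt (1 + d ^ 2) := Real.sqrt_pos.mpr h1d
  have hA2 : Real.sqrt (1 + d ^ 2) ^ 2 = 1 + d ^ 2 := Real.sq_sqrt (le_of_lt h1d)
  have hcpos : 0 < c := by rw [h2]; positivity
  have hc2 : c ^ 2 * (1 + d ^ 2) = 1 := by
    rw [h2]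
    rw [inv_pow]
    rw [inv_mul_eq_div, div_eq_one_iff_eq (by positivity), hA2]
  have e0 : c * (deriv (deriv v) 0 * (1 + d ^ 2) - deriv (deriv u) z * c) = 0 := by
    linear_combination veq - d * deriv (deriv v) 0 * h1
  have e1 : deriv (deriv v) 0 * (1 + d ^ 2) = deriv (deriv u) z * c := by
    rcases mul_eq_zero.1 e0 with hcc | hgood
    · exact absurd hcc (ne_of_gt hcpos)
    · linarith
  have e2 : deriv (deriv v) 0 = deriv (deriv u) z * c ^ 3 := by
    calc deriv (deriv v) 0 = deriv (deriv v) 0 * (c ^ 2 * (1 + d ^ 2)) := by rw [hc2]; ring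
    _ = deriv (deriv v) 0 * (1 + d ^ 2) * c ^ 2 := by ring
    _ = deriv (deriv u) z * c * c ^ 2 := by rw [e1]
    _ = deriv (deriv u) z * c ^ 3 := by ring
  rw [hh, e2, h2]

end Values

section ODE
open Filter

variable {η : Plane → ℝ} {E F : Set Plane} {x : Plane} {R : Plane ≃ₗᵢ[ℝ] Plane}
  {r r₁ r₂ : ℝ} {u u₁ u₂ : ℝ → ℝ}

lemma contDiff_g : ContDiff ℝ 1 (fun p : ℝ => (1 + p ^ 2) * Real.sqrt (1 + p ^ 2)) := by
  rw [contDiff_iff_contDiffAt]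
  intro p
  have h1 : (0:ℝ) < 1 + p ^ 2 := by positivity
  have hbase : ContDiffAt ℝ 1 (fun p : ℝ => 1 + p ^ 2) p := by fun_prop
  exact hbase.mul ((Real.contDiffAt_sqrt (ne_of_gt h1)).comp p hbase)

lemma contDiff_G (hη : ContDiff ℝ 1 η) :
    ContDiff ℝ 1 (fun q : ℝ × ℝ × ℝ =>
      ((q.2.2 : ℝ), -(η (x + R (coords (q.1, q.2.1)))
        * ((1 + q.2.2 ^ 2) * Real.sqrt (1 + q.2.2 ^ 2))))) := by
  have h1 : ContDiff ℝ 1 (fun q : ℝ × ℝ × ℝ => coords (q.1, q.2.1)) := by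
    simp only [coords]
    fun_prop
  have h2 : ContDiff ℝ 1 (fun q : ℝ × ℝ × ℝ => x + R (coords (q.1, q.2.1))) := by
    have hr : ContDiff ℝ 1 (fun w : Plane => R w) := R.contDiff
    fun_prop
  have h3 : ContDiff ℝ 1 (fun q : ℝ × ℝ × ℝ => η (x + R (coords (q.1, q.2.1)))) := hη.comp h2
  have h4 : ContDiff ℝ 1 (fun q : ℝ × ℝ × ℝ => (1 + q.2.2 ^ 2) * Real.sqrt (1 + q.2.2 ^ 2)) :=
    contDiff_g.comp (contDiff_snd.comp contDiff_snd)
  exact ContDiff.prodMk (contDiff_snd.comp contDiff_snd) ((h3.mul h4).neg)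

/-- The second-order ODE satisfied by a boundary chart with prescribed curvature. -/
lemma ode_of_chart (hcurv : ∀ y ∈ frontier E, HasCurvatureAt E y (η y))
    (hC : IsChartAt 2 E x r R u) {z : ℝ} (hz : z ∈ Ioo (-r) r) (hsmall : |u z| < r) :
    deriv (deriv u) z
      = -(η (x + R (coords (z, u z)))
          * ((1 + deriv u z ^ 2) * Real.sqrt (1 + deriv u z ^ 2))) := by
  have hfr : x + R (coords (z, u z)) ∈ frontier E := by
    refine ((hC.2.2.2.2.2 (z, u z)) ⟨hz, abs_lt.1 hsmall⟩).2.mpr rfl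
  have hval := curv_val hC hz hsmall (hcurv _ hfr)
  set d := deriv u z with hd
  have h1d : (0:ℝ) < 1 + d ^ 2 := by positivity
  have hA : (0:ℝ) < Real.sqrt (1 + d ^ 2) := Real.sqrt_pos.mpr h1d
  have hA2 : Real.sqrt (1 + d ^ 2) ^ 2 = 1 + d ^ 2 := Real.sq_sqrt (le_of_lt h1d)
  have hcube : Real.sqrt (1 + d ^ 2) ^ 3 = (1 + d ^ 2) * Real.sqrt (1 + d ^ 2) := by
    rw [pow_succ, hA2]
  rw [hval]
  rw [show (-(deriv (deriv u) z * ((Real.sqrt (1 + d ^ 2))⁻¹) ^ 3))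
      = -(deriv (deriv u) z) * ((Real.sqrt (1 + d ^ 2))⁻¹) ^ 3 from by ring]
  rw [← hcube]
  field_simp

/-- Two charts at the same point with the same rotation, for sets with the same prescribed
curvature `η`, agree near `0`. -/
lemma charts_eq (hη : ContDiff ℝ 1 η)
    (hcurvE : ∀ y ∈ frontier E, HasCurvatureAt E y (η y))
    (hcurvF : ∀ y ∈ frontier F, HasCurvatureAt F y (η y))
    (hCE : IsChartAt 2 E x r₁ R u₁) (hCF : IsChartAt 2 F x r₂ R u₂) :
    ∃ ρ > 0, ρ ≤ r₁ ∧ ρ ≤ r₂ ∧ ∀ z ∈ Ioo (-ρ) ρ, u₁ z = u₂ z := by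
  obtain ⟨hr₁, hR, hu₁2, hu₁0, hu₁'0, hmem₁⟩ := hCE
  obtain ⟨hr₂, _, hu₂2, hu₂0, hu₂'0, hmem₂⟩ := hCF
  -- step 1 : a radius ρ with |u i| < min r₁ r₂ there
  have hcont₁ : ContinuousAt u₁ 0 :=
    hu₁2.continuousOn.continuousAt (Icc_mem_nhds (by linarith) hr₁)
  have hcont₂ : ContinuousAt u₂ 0 :=
    hu₂2.continuousOn.continuousAt (Icc_mem_nhds (by linarith) hr₂)
  set r₀ : ℝ := min r₁ r₂ with hr₀def
  have hr₀ : 0 < r₀ := lt_min hr₁ hr₂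
  have hev : ∀ᶠ z in 𝓝 (0:ℝ), |u₁ z| < r₀ ∧ |u₂ z| < r₀ := by
    have h1 : ∀ᶠ z in 𝓝 (0:ℝ), |u₁ z| < r₀ := by
      have : ContinuousAt (fun z => |u₁ z|) 0 := hcont₁.abs
      have h0 : |u₁ 0| < r₀ := by rw [hu₁0]; simpa using hr₀
      exact this.eventually_lt continuousAt_const h0
    have h2 : ∀ᶠ z in 𝓝 (0:ℝ), |u₂ z| < r₀ := by
      have : ContinuousAt (fun z => |u₂ z|) 0 := hcont₂.abs
      have h0 : |u₂ 0| < r₀ := by rw [hu₂0]; simpa using hr₀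
      exact this.eventually_lt continuousAt_const h0
    exact h1.and h2
  obtain ⟨ε, hε, hball⟩ := Metric.eventually_nhds_iff_ball.mp hev
  set ρ : ℝ := min (ε / 2) (r₀ / 2) with hρdef
  have hρ : 0 < ρ := lt_min (by linarith) (by linarith)
  have hρr₀ : ρ < r₀ := (min_le_right _ _).trans_lt (by linarith)
  have hsub : ∀ z ∈ Ioo (-ρ) ρ, |u₁ z| < r₀ ∧ |u₂ z| < r₀ := by
    intro z hz
    apply hball
    rw [Metric.mem_ball, Real.dist_eq, sub_zero]
    have := abs_lt.mpr (show -(ε/2) < z ∧ z < ε/2 from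
      ⟨lt_of_le_of_lt (neg_le_neg (min_le_left _ _)) hz.1 |>.trans_le le_rfl,
        hz.2.trans_le (min_le_left _ _)⟩)
    linarith [this]
  -- the ODE satisfied by both charts
  have hρr₁ : ρ < r₁ := hρr₀.trans_le (min_le_left _ _)
  have hρr₂ : ρ < r₂ := hρr₀.trans_le (min_le_right _ _)
  have hIoo₁ : Ioo (-ρ) ρ ⊆ Ioo (-r₁) r₁ := Ioo_subset_Ioo (by linarith) (by linarith)
  have hIoo₂ : Ioo (-ρ) ρ ⊆ Ioo (-r₂) r₂ := Ioo_subset_Ioo (by linarith) (by linarith)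
  have hodeE : ∀ z ∈ Ioo (-ρ) ρ, deriv (deriv u₁) z
      = -(η (x + R (coords (z, u₁ z)))
          * ((1 + deriv u₁ z ^ 2) * Real.sqrt (1 + deriv u₁ z ^ 2))) := fun z hz =>
    ode_of_chart hcurvE ⟨hr₁, hR, hu₁2, hu₁0, hu₁'0, hmem₁⟩ (hIoo₁ hz)
      (lt_of_lt_of_le (hsub z hz).1 (min_le_left _ _))
  have hodeF : ∀ z ∈ Ioo (-ρ) ρ, deriv (deriv u₂) z
      = -(η (x + R (coords (z, u₂ z)))
          * ((1 + deriv u₂ z ^ 2) * Real.sqrt (1 + deriv u₂ z ^ 2))) := fun z hz =>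
    ode_of_chart hcurvF ⟨hr₂, hR, hu₂2, hu₂0, hu₂'0, hmem₂⟩ (hIoo₂ hz)
      (lt_of_lt_of_le (hsub z hz).2 (min_le_right _ _))
  -- bounds for the solutions on the compact interval
  have hd₁cont : ContinuousOn (deriv u₁) (Ioo (-r₁) r₁) :=
    (hu₁2.mono Ioo_subset_Icc_self).continuousOn_deriv_of_isOpen isOpen_Ioo (by norm_num)
  have hd₂cont : ContinuousOn (deriv u₂) (Ioo (-r₂) r₂) :=
    (hu₂2.mono Ioo_subset_Icc_self).continuousOn_deriv_of_isOpen isOpen_Ioo (by norm_num)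
  have hw₁cont : ContinuousOn (fun z => (u₁ z, deriv u₁ z)) (Ioo (-r₁) r₁) :=
    (hu₁2.continuousOn.mono Ioo_subset_Icc_self).prodMk hd₁cont
  have hw₂cont : ContinuousOn (fun z => (u₂ z, deriv u₂ z)) (Ioo (-r₂) r₂) :=
    (hu₂2.continuousOn.mono Ioo_subset_Icc_self).prodMk hd₂cont
  have hIccIoo : Icc (-(ρ/2)) (ρ/2) ⊆ Ioo (-ρ) ρ :=
    fun z hz => ⟨by linarith [hz.1], by linarith [hz.2]⟩
  obtain ⟨M₁, hM₁⟩ := (isCompact_Icc (a := -(ρ/2)) (b := ρ/2)).exists_bound_of_continuousOn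
    (hw₁cont.mono (fun z hz => hIoo₁ (hIccIoo hz)))
  obtain ⟨M₂, hM₂⟩ := (isCompact_Icc (a := -(ρ/2)) (b := ρ/2)).exists_bound_of_continuousOn
    (hw₂cont.mono (fun z hz => hIoo₂ (hIccIoo hz)))
  set M : ℝ := max M₁ M₂ with hMdef
  -- the vector field and its Lipschitz constant
  set G : ℝ × ℝ × ℝ → ℝ × ℝ := fun q =>
    ((q.2.2 : ℝ), -(η (x + R (coords (q.1, q.2.1)))
      * ((1 + q.2.2 ^ 2) * Real.sqrt (1 + q.2.2 ^ 2)))) with hGdef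
  have hG : ContDiff ℝ 1 G := contDiff_G hη
  set box3 : Set (ℝ × ℝ × ℝ) := Icc (-(ρ/2)) (ρ/2) ×ˢ Metric.closedBall (0 : ℝ × ℝ) M
    with hbox3
  have hconv : Convex ℝ box3 := (convex_Icc _ _).prod (convex_closedBall _ _)
  have hcomp3 : IsCompact box3 := isCompact_Icc.prod (isCompact_closedBall _ _)
  have hGdiff : ∀ q, DifferentiableAt ℝ G q := fun q =>
    hG.differentiable (by norm_num) q
  obtain ⟨C, hC⟩ := hcomp3.exists_bound_of_continuousOn
    ((hG.continuous_fderiv (by norm_num)).continuousOn (s := box3))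
  set K : NNReal := Real.toNNReal C with hKdef
  have hlip : LipschitzOnWith K G box3 := by
    refine Convex.lipschitzOnWith_of_nnnorm_fderiv_le (fun q _ => hGdiff q) ?_ hconv
    intro q hq
    rw [← NNReal.coe_le_coe, coe_nnnorm, hKdef, Real.coe_toNNReal']
    exact le_max_of_le_left (hC q hq)
  set sset : ℝ → Set (ℝ × ℝ) := fun t =>
    if t ∈ Icc (-(ρ/2)) (ρ/2) then Metric.closedBall (0 : ℝ × ℝ) M else ∅ with hsset
  set V : ℝ → ℝ × ℝ → ℝ × ℝ := fun t p =>
    ((p.2 : ℝ), -(η (x + R (coords (t, p.1)))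
      * ((1 + p.2 ^ 2) * Real.sqrt (1 + p.2 ^ 2)))) with hVdef
  have hv : ∀ t, LipschitzOnWith K (V t) (sset t) := by
    intro t
    by_cases ht : t ∈ Icc (-(ρ/2)) (ρ/2)
    · rw [hsset]
      simp only [if_pos ht]
      rw [lipschitzOnWith_iff_dist_le_mul]
      intro p hp q hq
      have h1 := lipschitzOnWith_iff_dist_le_mul.mp hlip ((t, p) : ℝ × ℝ × ℝ)
        ⟨ht, hp⟩ ((t, q) : ℝ × ℝ × ℝ) ⟨ht, hq⟩
      have h2 : dist ((t, p) : ℝ × ℝ × ℝ) ((t, q) : ℝ × ℝ × ℝ) = dist p q := by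
        rw [Prod.dist_eq, dist_self]
        exact max_eq_right dist_nonneg
      rw [h2] at h1
      exact h1
    · rw [hsset]
      simp only [if_neg ht]
      intro p hp
      exact absurd hp (notMem_empty p)
  -- the two solutions
  have hsol : ∀ (w : ℝ → ℝ) (rw : ℝ) (hww : ContDiffOn ℝ 2 w (Icc (-rw) rw))
      (hIoow : Ioo (-ρ) ρ ⊆ Ioo (-rw) rw)
      (hodew : ∀ z ∈ Ioo (-ρ) ρ, deriv (deriv w) z
        = -(η (x + R (coords (z, w z)))
          * ((1 + deriv w z ^ 2) * Real.sqrt (1 + deriv w z ^ 2))))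
      (hMw : ∀ z ∈ Icc (-(ρ/2)) (ρ/2), ‖(w z, deriv w z)‖ ≤ M),
      ∀ t ∈ Ioo (-(ρ/2)) (ρ/2),
        HasDerivAt (fun z => (w z, deriv w z)) (V t (w t, deriv w t)) t
          ∧ (w t, deriv w t) ∈ sset t := by
    intro w rw hww hIoow hodew hMw t ht
    have htρ : t ∈ Ioo (-ρ) ρ := ⟨by linarith [ht.1], by linarith [ht.2]⟩
    have htr : t ∈ Ioo (-rw) rw := hIoow htρ
    have hwO : ContDiffOn ℝ 2 w (Ioo (-rw) rw) := hww.mono Ioo_subset_Icc_self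
    have hdwO : ContDiffOn ℝ 1 (deriv w) (Ioo (-rw) rw) :=
      hwO.deriv_of_isOpen isOpen_Ioo (by norm_num)
    have hw1 : HasDerivAt w (deriv w t) t :=
      ((hwO.differentiableOn (by norm_num)).differentiableAt
        (isOpen_Ioo.mem_nhds htr)).hasDerivAt
    have hw2 : HasDerivAt (deriv w) (deriv (deriv w) t) t :=
      ((hdwO.differentiableOn (by norm_num)).differentiableAt
        (isOpen_Ioo.mem_nhds htr)).hasDerivAt
    constructor
    · have := hw1.prodMk hw2
      rw [hodew t htρ] at this
      exact this
    · rw [hsset]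
      simp only [if_pos (Ioo_subset_Icc_self ht)]
      rw [Metric.mem_closedBall, dist_zero_right]
      exact hMw t (Ioo_subset_Icc_self ht)
  have heq0 : ((u₁ 0, deriv u₁ 0) : ℝ × ℝ) = (u₂ 0, deriv u₂ 0) := by
    rw [hu₁0, hu₂0, hu₁'0, hu₂'0]
  have hM₁' : ∀ z ∈ Icc (-(ρ/2)) (ρ/2), ‖((u₁ z, deriv u₁ z) : ℝ × ℝ)‖ ≤ M :=
    fun z hz => (hM₁ z hz).trans (le_max_left _ _)
  have hM₂' : ∀ z ∈ Icc (-(ρ/2)) (ρ/2), ‖((u₂ z, deriv u₂ z) : ℝ × ℝ)‖ ≤ M :=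
    fun z hz => (hM₂ z hz).trans (le_max_right _ _)
  have huniq := ODE_solution_unique_of_mem_Ioo (v := V) (s := sset) (K := K) (fun t _ => hv t)
    (t₀ := 0) (a := -(ρ/2)) (b := ρ/2) ⟨by linarith, by linarith⟩
    (hsol u₁ r₁ hu₁2 hIoo₁ hodeE hM₁') (hsol u₂ r₂ hu₂2 hIoo₂ hodeF hM₂') heq0
  refine ⟨ρ/2, by linarith, by linarith, by linarith, ?_⟩
  intro z hz
  have := huniq hz
  exact congrArg Prod.fst this

end ODE

section Topo
open Filter

variable {E F : Set Plane} {x : Plane} {r : ℝ} {R : Plane ≃ₗᵢ[ℝ] Plane} {u : ℝ → ℝ}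

lemma rot_e0 (Q : Plane ≃ₗᵢ[ℝ] Plane) (hQ : IsRotation Q) :
    Q e₀ = coords (Q e₁ 1, -(Q e₁ 0)) := by
  have hn0 : ‖Q e₀‖ ^ 2 = 1 := by
    rw [Q.norm_map, EuclideanSpace.norm_single]; norm_num
  have hn1 : ‖Q e₁‖ ^ 2 = 1 := by
    rw [Q.norm_map, EuclideanSpace.norm_single]; norm_num
  have horth : (inner ℝ (Q e₀) (Q e₁) : ℝ) = 0 := by
    rw [Q.inner_map_map, Aux.inner_eq]
    simp [EuclideanSpace.single_apply]
  rw [Aux.norm_sq_eq] at hn0 hn1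
  rw [Aux.inner_eq] at horth
  have hdet := hQ
  rw [IsRotation, Aux.det_eq] at hdet
  set a := Q e₀ 0; set b := Q e₀ 1; set c := Q e₁ 0; set d := Q e₁ 1
  have ha : a = d := by
    nlinarith [sq_nonneg (c + b), sq_nonneg (c - b), sq_nonneg (d - a), sq_nonneg (d + a)]
  have hb : b = -c := by
    nlinarith [sq_nonneg (c + b), sq_nonneg (c - b), sq_nonneg (d - a), sq_nonneg (d + a)]
  calc Q e₀ = coords (a, b) := Aux.eq_coords _
  _ = coords (d, -c) := by rw [ha, hb]

lemma rot_ext {R₁ R₂ : Plane ≃ₗᵢ[ℝ] Plane} (h₁ : IsRotation R₁) (h₂ : IsRotation R₂)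
    (h : R₁ e₁ = R₂ e₁) : R₁ = R₂ := by
  have h0 : R₁ e₀ = R₂ e₀ := by
    rw [rot_e0 R₁ h₁, rot_e0 R₂ h₂, h]
  refine LinearIsometryEquiv.ext fun w => ?_
  have hw : w = coords (w 0, w 1) := Aux.eq_coords w
  rw [hw]
  show R₁ (w 0 • e₀ + w 1 • e₁) = R₂ (w 0 • e₀ + w 1 • e₁)
  rw [map_add, map_add, R₁.map_smul, R₂.map_smul, R₁.map_smul, R₂.map_smul, h, h0]

lemma point_decomp (x : Plane) (R : Plane ≃ₗᵢ[ℝ] Plane) (y : Plane) :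
    y = x + R (coords (R.symm (y - x) 0, R.symm (y - x) 1)) := by
  rw [← Aux.eq_coords (R.symm (y - x))]
  simp

lemma chart_shrink {k : ℕ∞} {r' : ℝ} (hC : IsChartAt k E x r R u) (h0 : 0 < r') (hle : r' ≤ r) :
    IsChartAt k E x r' R u := by
  obtain ⟨hr, hrot, hsm, hu0, hu'0, hmem⟩ := hC
  exact ⟨h0, hrot, hsm.mono (Icc_subset_Icc (by linarith) hle), hu0, hu'0,
    fun p hp => hmem p ⟨Ioo_subset_Ioo (by linarith) hle hp.1, Ioo_subset_Ioo (by linarith) hle hp.2⟩⟩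

lemma frontier_congr_of_open {W : Set Plane} (hW : IsOpen W)
    (h : ∀ y ∈ W, (y ∈ E ↔ y ∈ F)) :
    ∀ y ∈ W, (y ∈ frontier E ↔ y ∈ frontier F) := by
  intro y hy
  have hEW : E ∩ W = F ∩ W := by
    ext w
    by_cases hw : w ∈ W
    · simp only [mem_inter_iff, hw, and_true]
      exact h w hw
    · simp [hw]
  have hclo : ∀ G : Set Plane, (y ∈ closure G ↔ y ∈ closure (G ∩ W)) := by
    intro G
    constructor
    · intro hyc
      have := hW.inter_closure (t := G) ⟨hy, hyc⟩
      rwa [inter_comm] at this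
    · exact fun hc => closure_mono inter_subset_left hc
  have hint : ∀ G : Set Plane, (y ∈ interior G ↔ y ∈ interior (G ∩ W)) := by
    intro G
    rw [interior_inter, hW.interior_eq]
    simp [hy]
  rw [frontier, frontier, mem_diff, mem_diff, hclo E, hclo F, hint E, hint F, hEW]

lemma norm_coords_le (p : ℝ × ℝ) : ‖coords p‖ ≤ |p.1| + |p.2| := by
  refine (norm_add_le _ _).trans ?_
  rw [norm_smul, norm_smul, EuclideanSpace.norm_single, EuclideanSpace.norm_single]
  simp [Real.norm_eq_abs]

lemma chart_transfer {W : Set Plane} (hW : IsOpen W)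
    (hEF : ∀ y ∈ W, (y ∈ E ↔ y ∈ F)) (hx : x ∈ W)
    (hC : IsChartAt 1 E x r R u) : ∃ r', 0 < r' ∧ r' ≤ r ∧ IsChartAt 1 F x r' R u := by
  obtain ⟨ε, hε, hball⟩ := Metric.isOpen_iff.mp hW x hx
  set r' : ℝ := min r (ε / 3) with hr'def
  have hr' : 0 < r' := lt_min hC.1 (by linarith)
  have hsubW : ∀ p : ℝ × ℝ, p ∈ Ioo (-r') r' ×ˢ Ioo (-r') r' → x + R (coords p) ∈ W := by
    intro p hp
    apply hball
    rw [Metric.mem_ball, dist_eq_norm]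
    have h1 : |p.1| < r' := abs_lt.mpr ⟨hp.1.1, hp.1.2⟩
    have h2 : |p.2| < r' := abs_lt.mpr ⟨hp.2.1, hp.2.2⟩
    have h3 : ‖x + R (coords p) - x‖ = ‖coords p‖ := by
      rw [add_sub_cancel_left, R.norm_map]
    rw [h3]
    have := norm_coords_le p
    have hr'ε : r' ≤ ε / 3 := min_le_right _ _
    linarith
  have hfr := frontier_congr_of_open hW hEF
  have hC' := chart_shrink hC hr' (min_le_left _ _)
  obtain ⟨hr0, hrot, hsm, hu0, hu'0, hmem⟩ := hC'
  refine ⟨r', hr', min_le_left _ _, hr0, hrot, hsm, hu0, hu'0, ?_⟩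
  intro p hp
  have hWp := hsubW p hp
  constructor
  · rw [← hEF _ hWp]
    exact (hmem p hp).1
  · rw [← hfr _ hWp]
    exact (hmem p hp).2

end Topo

section Key
open Filter

/-- The set of common boundary points with a common outward normal. -/
def SharedSet (E F : Set Plane) : Set Plane :=
  {x ∈ frontier E ∩ frontier F | ∃ ν, HasNormalAt E x ν ∧ HasNormalAt F x ν}

variable {η : Plane → ℝ} {E F : Set Plane}

lemma key_open (hη : ContDiff ℝ 1 η)
    (hHE : ∀ y ∈ frontier E, HasCurvatureAt E y (η y))
    (hHF : ∀ y ∈ frontier F, HasCurvatureAt F y (η y))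
    (hE : IsCkSet 2 E) (hF : IsCkSet 2 F)
    {x₀ : Plane} (hx₀ : x₀ ∈ SharedSet E F) :
    ∃ W : Set Plane, IsOpen W ∧ x₀ ∈ W ∧
      (∀ y ∈ frontier E ∩ W, y ∈ SharedSet E F) ∧
      (∀ y ∈ frontier F ∩ W, y ∈ SharedSet E F) := by
  obtain ⟨⟨hxE, hxF⟩, ν, hνE, hνF⟩ := hx₀
  obtain ⟨r₁, R₁, u₁, hC₁, _⟩ := hHE x₀ hxE
  obtain ⟨r₂, R₂, u₂, hC₂, _⟩ := hHF x₀ hxF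
  have hν₁ : ν = R₁ e₁ := normal_base (chart_mono (by norm_num) hC₁) hνE
  have hν₂ : ν = R₂ e₁ := normal_base (chart_mono (by norm_num) hC₂) hνF
  have hRR : R₁ = R₂ := rot_ext hC₁.2.1 hC₂.2.1 (hν₁ ▸ hν₂)
  rw [← hRR] at hC₂
  obtain ⟨ρ, hρ, hρ₁, hρ₂, hEqOn⟩ := charts_eq hη hHE hHF hC₁ hC₂
  set W := {y : Plane | ((R₁.symm (y - x₀)) 0, (R₁.symm (y - x₀)) 1)
      ∈ Ioo (-ρ) ρ ×ˢ Ioo (-ρ) ρ} with hWdef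
  have hcontφ : Continuous (fun y : Plane => ((R₁.symm (y - x₀)) 0, (R₁.symm (y - x₀)) 1)) := by
    refine Continuous.prodMk ?_ ?_
    · exact (continuous_apply (0 : Fin 2)).comp
        ((PiLp.continuous_ofLp 2 _).comp (R₁.symm.continuous.comp (continuous_id.sub continuous_const)))
    · exact (continuous_apply (1 : Fin 2)).comp
        ((PiLp.continuous_ofLp 2 _).comp (R₁.symm.continuous.comp (continuous_id.sub continuous_const)))
  have hWopen : IsOpen W := (isOpen_Ioo.prod isOpen_Ioo).preimage hcontφ
  have hx₀W : x₀ ∈ W := by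
    have h0 : ((R₁.symm (x₀ - x₀)) 0, (R₁.symm (x₀ - x₀)) 1) = ((0:ℝ), (0:ℝ)) := by
      rw [sub_self, map_zero]
      constructor
    rw [hWdef, mem_setOf_eq, h0]
    refine ⟨⟨?_, ?_⟩, ?_, ?_⟩ <;> simp <;> linarith
  have hEF : ∀ y ∈ W, (y ∈ E ↔ y ∈ F) := by
    intro y hy
    have hdec := point_decomp x₀ R₁ y
    set p : ℝ × ℝ := ((R₁.symm (y - x₀)) 0, (R₁.symm (y - x₀)) 1) with hpdef
    have hp : p ∈ Ioo (-ρ) ρ ×ˢ Ioo (-ρ) ρ := hy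
    have hp₁ : p ∈ Ioo (-r₁) r₁ ×ˢ Ioo (-r₁) r₁ :=
      ⟨Ioo_subset_Ioo (by linarith) hρ₁ hp.1, Ioo_subset_Ioo (by linarith) hρ₁ hp.2⟩
    have hp₂ : p ∈ Ioo (-r₂) r₂ ×ˢ Ioo (-r₂) r₂ :=
      ⟨Ioo_subset_Ioo (by linarith) hρ₂ hp.1, Ioo_subset_Ioo (by linarith) hρ₂ hp.2⟩
    rw [hdec]
    rw [(hC₁.2.2.2.2.2 p hp₁).1, (hC₂.2.2.2.2.2 p hp₂).1, hEqOn p.1 hp.1]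
  have hfr := frontier_congr_of_open hWopen hEF
  have hEF' : ∀ y ∈ W, (y ∈ F ↔ y ∈ E) := fun y hy => (hEF y hy).symm
  refine ⟨W, hWopen, hx₀W, ?_, ?_⟩
  · rintro y ⟨hyE, hyW⟩
    have hyF : y ∈ frontier F := (hfr y hyW).mp hyE
    obtain ⟨r₃, R₃, u₃, hC₃⟩ := hE.2.2 y hyE
    have hC₃' := chart_mono (k' := 1) (by norm_num) hC₃
    obtain ⟨r₄, hr₄, _, hC₄⟩ := chart_transfer hWopen hEF hyW hC₃'
    exact ⟨⟨hyE, hyF⟩, R₃ e₁, ⟨r₃, R₃, u₃, hC₃', rfl⟩, ⟨r₄, R₃, u₃, hC₄, rfl⟩⟩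
  · rintro y ⟨hyF, hyW⟩
    have hyE : y ∈ frontier E := (hfr y hyW).mpr hyF
    obtain ⟨r₃, R₃, u₃, hC₃⟩ := hF.2.2 y hyF
    have hC₃' := chart_mono (k' := 1) (by norm_num) hC₃
    obtain ⟨r₄, hr₄, _, hC₄⟩ := chart_transfer hWopen hEF' hyW hC₃'
    exact ⟨⟨hyE, hyF⟩, R₃ e₁, ⟨r₄, R₃, u₃, hC₄, rfl⟩, ⟨r₃, R₃, u₃, hC₃', rfl⟩⟩

lemma key_closed (hE : IsCkSet 2 E) (hF : IsCkSet 2 F)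
    {x₀ : Plane} {xs : ℕ → Plane}
    (hxs : ∀ n, xs n ∈ SharedSet E F) (hlim : Tendsto xs atTop (𝓝 x₀)) :
    x₀ ∈ SharedSet E F := by
  have hxE : x₀ ∈ frontier E :=
    isClosed_frontier.mem_of_tendsto hlim (Eventually.of_forall fun n => (hxs n).1.1)
  have hxF : x₀ ∈ frontier F :=
    isClosed_frontier.mem_of_tendsto hlim (Eventually.of_forall fun n => (hxs n).1.2)
  obtain ⟨r₁, R₁, u₁, hC₁⟩ := hE.2.2 x₀ hxE
  obtain ⟨r₂, R₂, u₂, hC₂⟩ := hF.2.2 x₀ hxF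
  choose ν hνE hνF using fun n => (hxs n).2
  have main : ∀ (G : Set Plane) (r : ℝ) (R : Plane ≃ₗᵢ[ℝ] Plane) (u : ℝ → ℝ),
      IsChartAt 2 G x₀ r R u → (∀ n, xs n ∈ frontier G) →
      (∀ n, HasNormalAt G (xs n) (ν n)) →
      Tendsto ν atTop (𝓝 (R e₁)) := by
    intro G r R u hC hfrs hνs
    obtain ⟨hr, hrot, hu2, hu0, hu'0, hmem⟩ := hC
    set φ : ℕ → ℝ × ℝ := fun n => ((R.symm (xs n - x₀)) 0, (R.symm (xs n - x₀)) 1) with hφdef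
    have hcontφ : Continuous (fun y : Plane => ((R.symm (y - x₀)) 0, (R.symm (y - x₀)) 1)) := by
      refine Continuous.prodMk ?_ ?_
      · exact (continuous_apply (0 : Fin 2)).comp
          ((PiLp.continuous_ofLp 2 _).comp (R.symm.continuous.comp (continuous_id.sub continuous_const)))
      · exact (continuous_apply (1 : Fin 2)).comp
          ((PiLp.continuous_ofLp 2 _).comp (R.symm.continuous.comp (continuous_id.sub continuous_const)))
    have hφlim : Tendsto φ atTop (𝓝 ((0:ℝ), (0:ℝ))) := by
      have h0 : ((R.symm (x₀ - x₀)) 0, (R.symm (x₀ - x₀)) 1) = ((0:ℝ), (0:ℝ)) := by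
        rw [sub_self, map_zero]; constructor
      have := (hcontφ.continuousAt (x := x₀)).tendsto.comp hlim
      rwa [h0] at this
    have hev : ∀ᶠ n in atTop, φ n ∈ Ioo (-r) r ×ˢ Ioo (-r) r := by
      refine hφlim ((isOpen_Ioo.prod isOpen_Ioo).mem_nhds ?_)
      refine ⟨⟨?_, ?_⟩, ?_, ?_⟩ <;> simp <;> linarith
    have hkey : ∀ᶠ n in atTop, ν n
        = (Real.sqrt (1 + deriv u ((φ n).1) ^ 2))⁻¹ • R (coords (-(deriv u ((φ n).1)), 1)) := by
      filter_upwards [hev] with n hn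
      have hdec : xs n = x₀ + R (coords (φ n)) := point_decomp x₀ R (xs n)
      have hfrn := hfrs n
      rw [hdec] at hfrn
      have h2 : (φ n).2 = u ((φ n).1) := (hmem (φ n) hn).2.mp hfrn
      have hdec' : xs n = x₀ + R (coords ((φ n).1, u ((φ n).1))) := by
        rw [← h2, hdec]
      have habs : |u ((φ n).1)| < r := by
        rw [← h2]
        exact abs_lt.mpr ⟨hn.2.1, hn.2.2⟩
      exact normal_val (chart_mono (by norm_num) ⟨hr, hrot, hu2, hu0, hu'0, hmem⟩)
        hn.1 habs (hdec' ▸ hνs n)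
    have hz : Tendsto (fun n => (φ n).1) atTop (𝓝 0) :=
      (continuous_fst.continuousAt (x := ((0:ℝ), (0:ℝ)))).tendsto.comp hφlim
    have hdcont : ContinuousAt (deriv u) 0 :=
      (((hu2.mono Ioo_subset_Icc_self).continuousOn_deriv_of_isOpen isOpen_Ioo
        (by norm_num)).continuousAt (isOpen_Ioo.mem_nhds ⟨by linarith, hr⟩))
    have hd0 : Tendsto (fun n => deriv u ((φ n).1)) atTop (𝓝 0) := by
      have := hdcont.tendsto.comp hz
      rwa [hu'0] at this
    have hA : Tendsto (fun n => (Real.sqrt (1 + deriv u ((φ n).1) ^ 2))⁻¹) atTop (𝓝 1) := by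
      have h1 : ContinuousAt (fun t : ℝ => Real.sqrt (1 + t ^ 2)) 0 :=
        (Real.continuous_sqrt.comp (continuous_const.add (continuous_pow 2))).continuousAt
      have hψ : ContinuousAt (fun t : ℝ => (Real.sqrt (1 + t ^ 2))⁻¹) 0 := by
        refine h1.inv₀ ?_
        norm_num
      have h2 : Tendsto (fun n => (Real.sqrt (1 + deriv u ((φ n).1) ^ 2))⁻¹) atTop
          (𝓝 ((Real.sqrt (1 + (0:ℝ) ^ 2))⁻¹)) := hψ.tendsto.comp hd0
      rwa [show (Real.sqrt (1 + (0:ℝ) ^ 2))⁻¹ = 1 by norm_num [Real.sqrt_one]] at h2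
    have hB : Tendsto (fun n => R (coords (-(deriv u ((φ n).1)), 1))) atTop
        (𝓝 (R (coords (0, 1)))) := by
      have hcont : Continuous (fun t : ℝ => R (coords (-t, 1))) :=
        R.continuous.comp (Aux.continuous_coords.comp (continuous_neg.prodMk continuous_const))
      have h2 : Tendsto (fun n => R (coords (-(deriv u ((φ n).1)), 1))) atTop
          (𝓝 (R (coords (-(0:ℝ), 1)))) := (hcont.continuousAt (x := (0:ℝ))).tendsto.comp hd0
      rwa [neg_zero] at h2
    have hkey' : (fun n => (Real.sqrt (1 + deriv u ((φ n).1) ^ 2))⁻¹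
        • R (coords (-(deriv u ((φ n).1)), 1))) =ᶠ[atTop] ν :=
      Filter.EventuallyEq.symm hkey
    have hlimν : Tendsto ν atTop (𝓝 ((1:ℝ) • R (coords (0, 1)))) :=
      (hA.smul hB).congr' hkey'
    rw [one_smul, coords_e1] at hlimν
    exact hlimν
  have hE1 := main E r₁ R₁ u₁ hC₁ (fun n => (hxs n).1.1) hνE
  have hF1 := main F r₂ R₂ u₂ hC₂ (fun n => (hxs n).1.2) hνF
  have hR12 : R₁ e₁ = R₂ e₁ := tendsto_nhds_unique hE1 hF1
  exact ⟨⟨hxE, hxF⟩, R₁ e₁, ⟨r₁, R₁, u₁, chart_mono (by norm_num) hC₁, rfl⟩,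
    ⟨r₂, R₂, u₂, chart_mono (by norm_num) hC₂, hR12⟩⟩

end Key


theorem stmt8 (η : Plane → ℝ) (hη : ContDiff ℝ 1 η)
    (E F : Set Plane) (hE : IsCkSet 2 E) (hF : IsCkSet 2 F)
    (hHE : ∀ x ∈ frontier E, HasCurvatureAt E x (η x))
    (hHF : ∀ x ∈ frontier F, HasCurvatureAt F x (η x)) :
    IsOpen (Subtype.val ⁻¹'
        {x ∈ frontier E ∩ frontier F | ∃ ν, HasNormalAt E x ν ∧ HasNormalAt F x ν} :
        Set (frontier E)) ∧
    IsClosed (Subtype.val ⁻¹'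
        {x ∈ frontier E ∩ frontier F | ∃ ν, HasNormalAt E x ν ∧ HasNormalAt F x ν} :
        Set (frontier E)) ∧
    IsOpen (Subtype.val ⁻¹'
        {x ∈ frontier E ∩ frontier F | ∃ ν, HasNormalAt E x ν ∧ HasNormalAt F x ν} :
        Set (frontier F)) ∧
    IsClosed (Subtype.val ⁻¹'
        {x ∈ frontier E ∩ frontier F | ∃ ν, HasNormalAt E x ν ∧ HasNormalAt F x ν} :
        Set (frontier F)) := by
  have hSdef : {x ∈ frontier E ∩ frontier F | ∃ ν, HasNormalAt E x ν ∧ HasNormalAt F x ν}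
      = SharedSet E F := rfl
  rw [hSdef]
  have hopenE : IsOpen (Subtype.val ⁻¹' SharedSet E F : Set (frontier E)) := by
    rw [isOpen_iff_forall_mem_open]
    intro a ha
    obtain ⟨W, hWopen, haW, hWE, _⟩ := key_open hη hHE hHF hE hF ha
    refine ⟨Subtype.val ⁻¹' W, ?_, hWopen.preimage continuous_subtype_val, haW⟩
    intro b hb
    exact hWE b.1 ⟨b.2, hb⟩
  have hopenF : IsOpen (Subtype.val ⁻¹' SharedSet E F : Set (frontier F)) := by
    rw [isOpen_iff_forall_mem_open]
    intro a ha
    obtain ⟨W, hWopen, haW, _, hWF⟩ := key_open hη hHE hHF hE hF ha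
    refine ⟨Subtype.val ⁻¹' W, ?_, hWopen.preimage continuous_subtype_val, haW⟩
    intro b hb
    exact hWF b.1 ⟨b.2, hb⟩
  have hclosedE : IsClosed (Subtype.val ⁻¹' SharedSet E F : Set (frontier E)) := by
    refine IsSeqClosed.isClosed ?_
    intro γ a hγ hlim
    have hvals : Filter.Tendsto (fun n => (γ n : Plane)) Filter.atTop (𝓝 (a : Plane)) :=
      (continuous_subtype_val.continuousAt.tendsto).comp hlim
    exact key_closed hE hF hγ hvals
  have hclosedF : IsClosed (Subtype.val ⁻¹' SharedSet E F : Set (frontier F)) := by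
    refine IsSeqClosed.isClosed ?_
    intro γ a hγ hlim
    have hvals : Filter.Tendsto (fun n => (γ n : Plane)) Filter.atTop (𝓝 (a : Plane)) :=
      (continuous_subtype_val.continuousAt.tendsto).comp hlim
    exact key_closed hE hF hγ hvals
  exact ⟨hopenE, hclosedE, hopenF, hclosedF⟩


end
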